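/- Define in (ℂ²)^{⊗4} the states |0̄⟩ = |ψ⁻⟩₁₂ ⊗ |ψ⁻⟩₃₄ and |1̄⟩ = (1/√3)(|T₊⟩₁₂⊗|T₋⟩₃₄ − |T₀⟩₁₂⊗|T₀⟩₃₄ + |T₋⟩₁₂⊗|T₊⟩₃₄). Then |0̄⟩ and |1̄⟩ are unit vectors, are orthogonal to each other, and are annihilated by all three collective spin operators: S_x|0̄⟩ = S_y|0̄⟩ = S_z|0̄⟩ = 0 and S_x|1̄⟩ = S_y|1̄⟩ = S_z|1̄⟩ = 0. (Hence they span a decoherence-free subspace for strong collective decoherence on four qubits.) -/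

import Mathlib

open Complex

/-- A (not necessarily normalised) state of `N` qubits, as a function on the
computational basis `Fin N → Fin 2`. -/
abbrev QState (N : ℕ) := (Fin N → Fin 2) → ℂ

/-- The Hermitian inner product on `N`-qubit states. -/
noncomputable def qInner {N : ℕ} (ψ φ : QState N) : ℂ :=
  ∑ s : Fin N → Fin 2, (starRingEnd ℂ) (ψ s) * φ s

/-- Pauli `X` acting on the `n`-th qubit. -/
noncomputable def pauliX {N : ℕ} (n : Fin N) (ψ : QState N) : QState N :=
  fun s => ψ (Function.update s n (s n + 1))

/-- Pauli `Y` acting on the `n`-th qubit. -/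
noncomputable def pauliY {N : ℕ} (n : Fin N) (ψ : QState N) : QState N :=
  fun s => (if s n = 0 then -Complex.I else Complex.I) * ψ (Function.update s n (s n + 1))

/-- Pauli `Z` acting on the `n`-th qubit. -/
noncomputable def pauliZ {N : ℕ} (n : Fin N) (ψ : QState N) : QState N :=
  fun s => (if s n = 0 then 1 else -1) * ψ s

/-- The collective spin operator `S_x = (1/2) Σ_n X_n`. -/
noncomputable def Sx {N : ℕ} (ψ : QState N) : QState N :=
  (1 / 2 : ℂ) • ∑ n : Fin N, pauliX n ψ

/-- The collective spin operator `S_y = (1/2) Σ_n Y_n`. -/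
noncomputable def Sy {N : ℕ} (ψ : QState N) : QState N :=
  (1 / 2 : ℂ) • ∑ n : Fin N, pauliY n ψ

/-- The collective spin operator `S_z = (1/2) Σ_n Z_n`. -/
noncomputable def Sz {N : ℕ} (ψ : QState N) : QState N :=
  (1 / 2 : ℂ) • ∑ n : Fin N, pauliZ n ψ

/-- The two-qubit singlet state `|ψ⁻⟩ = (|01⟩ − |10⟩)/√2`. -/
noncomputable def singlet : Fin 2 → Fin 2 → ℂ := fun a b =>
  (if (a, b) = (0, 1) then 1 else if (a, b) = (1, 0) then -1 else 0) / (Real.sqrt 2 : ℂ)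

/-- The two-qubit triplet state `|T₊⟩ = |00⟩`. -/
noncomputable def Tplus : Fin 2 → Fin 2 → ℂ := fun a b => if (a, b) = (0, 0) then 1 else 0

/-- The two-qubit triplet state `|T₀⟩ = (|01⟩ + |10⟩)/√2`. -/
noncomputable def T0 : Fin 2 → Fin 2 → ℂ := fun a b =>
  (if (a, b) = (0, 1) then 1 else if (a, b) = (1, 0) then 1 else 0) / (Real.sqrt 2 : ℂ)

/-- The two-qubit triplet state `|T₋⟩ = |11⟩`. -/
noncomputable def Tminus : Fin 2 → Fin 2 → ℂ := fun a b => if (a, b) = (1, 1) then 1 else 0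

/-- The logical zero state `|0̄⟩ = |ψ⁻⟩₁₂ ⊗ |ψ⁻⟩₃₄` of the 4-qubit DF subspace. -/
noncomputable def zeroBar : QState 4 := fun s => singlet (s 0) (s 1) * singlet (s 2) (s 3)

/-- The logical one state
`|1̄⟩ = (1/√3)(|T₊⟩₁₂⊗|T₋⟩₃₄ − |T₀⟩₁₂⊗|T₀⟩₃₄ + |T₋⟩₁₂⊗|T₊⟩₃₄)` of the 4-qubit DF subspace. -/
noncomputable def oneBar : QState 4 := fun s =>
  (1 / (Real.sqrt 3 : ℂ)) *
    (Tplus (s 0) (s 1) * Tminus (s 2) (s 3) - T0 (s 0) (s 1) * T0 (s 2) (s 3) +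
      Tminus (s 0) (s 1) * Tplus (s 2) (s 3))

private lemma sum_pi4 (f : (Fin 4 → Fin 2) → ℂ) :
    ∑ s, f s = ∑ a : Fin 2, ∑ b : Fin 2, ∑ c : Fin 2, ∑ d : Fin 2, f ![a,b,c,d] := by
  rw [← Fintype.sum_bijective
    (fun p : Fin 2 × Fin 2 × Fin 2 × Fin 2 => ![p.1, p.2.1, p.2.2.1, p.2.2.2])
    (by decide) _ f (fun p => rfl), Fintype.sum_prod_type]
  simp [Fintype.sum_prod_type]

private lemma sq2 : ((Real.sqrt 2 : ℝ) : ℂ) ^ 2 = 2 := by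
  norm_cast; rw [Real.sq_sqrt] <;> norm_num

private lemma sq3 : ((Real.sqrt 3 : ℝ) : ℂ) ^ 2 = 3 := by
  norm_cast; rw [Real.sq_sqrt] <;> norm_num

set_option maxHeartbeats 4000000 in
/-- `|0̄⟩` and `|1̄⟩` are orthonormal and are annihilated by all three
collective spin operators, so they span a decoherence-free subspace for strong
collective decoherence on four qubits. -/
theorem four_qubit_df_subspace :
    qInner zeroBar zeroBar = 1 ∧ qInner oneBar oneBar = 1 ∧ qInner zeroBar oneBar = 0 ∧
      Sx zeroBar = 0 ∧ Sy zeroBar = 0 ∧ Sz zeroBar = 0 ∧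
      Sx oneBar = 0 ∧ Sy oneBar = 0 ∧ Sz oneBar = 0 := by
  have h : ∀ i : Fin 2, i = 0 ∨ i = 1 := by decide
  refine ⟨?_, ?_, ?_, ?_, ?_, ?_, ?_, ?_, ?_⟩
  · rw [qInner, sum_pi4]
    simp [zeroBar, singlet, Fin.sum_univ_two, map_div₀, Complex.conj_ofReal]
    field_simp
    ring_nf
    rw [show ((Real.sqrt 2 : ℝ) : ℂ) ^ 4 = 4 by
      rw [show (4 : ℕ) = 2 * 2 from rfl, pow_mul, sq2]; norm_num]
  · rw [qInner, sum_pi4]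
    simp [oneBar, Tplus, T0, Tminus, Fin.sum_univ_two, map_div₀, map_mul, map_sub, map_add,
      Complex.conj_ofReal]
    field_simp
    ring_nf
    simp only [inv_pow, sq2, sq3,
      show ((Real.sqrt 2 : ℝ) : ℂ) ^ 4 = 4 by
        rw [show (4 : ℕ) = 2 * 2 from rfl, pow_mul, sq2]; norm_num]
    norm_num
  · rw [qInner, sum_pi4]
    simp [zeroBar, oneBar, singlet, Tplus, T0, Tminus, Fin.sum_univ_two, map_div₀,
      Complex.conj_ofReal]
    ring
  all_goals
    funext s
    rcases h (s 0) with h0|h0 <;> rcases h (s 1) with h1|h1 <;>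
      rcases h (s 2) with h2|h2 <;> rcases h (s 3) with h3|h3 <;>
    · simp (config := { decide := true }) [Sx, Sy, Sz, pauliX, pauliY, pauliZ,
        Fin.sum_univ_four, zeroBar, oneBar, singlet, Tplus, T0, Tminus,
        Function.update, Fin.ext_iff, Prod.ext_iff, h0, h1, h2, h3]
      try ring
      try (ring_nf; simp only [inv_pow, sq2, sq3]; ring)
      try (simp only [inv_pow, sq2, sq3]; ring)
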